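/- In the i.i.d. persuasion model, the optimal value of the linear program: maximize n·(ξ·x) over x, y ∈ ℝ^m subject to ρ·x ≥ ρ·y, x + (n−1)y = q, ‖x‖_1 = 1/n, and x, y ≥ 0, is at least the maximum expected sender utility over all incentive-compatible direct signaling schemes. -/

import Mathlib

open Finset

namespace IID

variable {n m : ℕ}

/-- the i.i.d. prior on states `θ ∈ [m]^n`: `λ(θ) = ∏ i, q (θ i)` -/
def prior (q : Fin m → ℝ) (θ : Fin n → Fin m) : ℝ := ∏ i, q (θ i)

/-- a direct signaling scheme: each state gets a probability distribution over the
`n` signals, signal `i` recommending action `i` -/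
def IsScheme (φ : (Fin n → Fin m) → Fin n → ℝ) : Prop :=
  (∀ θ i, 0 ≤ φ θ i) ∧ ∀ θ, ∑ i, φ θ i = 1

/-- incentive compatibility: conditioned on each signal `i`, the recommended action `i`
maximizes the receiver's (type-determined) expected payoff -/
def IC (q ρ : Fin m → ℝ) (φ : (Fin n → Fin m) → Fin n → ℝ) : Prop :=
  ∀ i j : Fin n,
    ∑ θ : Fin n → Fin m, prior q θ * φ θ i * ρ (θ j) ≤
      ∑ θ : Fin n → Fin m, prior q θ * φ θ i * ρ (θ i)

/-- expected sender utility when the receiver follows the recommendations -/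
def senderUtil (q ξ : Fin m → ℝ) (φ : (Fin n → Fin m) → Fin n → ℝ) : ℝ :=
  ∑ θ : Fin n → Fin m, ∑ i, prior q θ * φ θ i * ξ (θ i)

/-- the signature of a scheme: `signature q φ i j k` is the joint probability that the
scheme sends signal `i` and action `j` has type `k` (entry `M^{σ_i}_{jk}`) -/
def signature (q : Fin m → ℝ) (φ : (Fin n → Fin m) → Fin n → ℝ)
    (i j : Fin n) (k : Fin m) : ℝ :=
  ∑ θ : Fin n → Fin m, if θ j = k then prior q θ * φ θ i else 0

end IID

open IID

section Helpers

variable {n m : ℕ}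

lemma my_prior_nonneg {q : Fin m → ℝ} (hq0 : ∀ k, 0 ≤ q k) (θ : Fin n → Fin m) :
    0 ≤ prior q θ :=
  Finset.prod_nonneg fun _ _ => hq0 _

lemma my_sum_prior {q : Fin m → ℝ} (hq1 : ∑ k, q k = 1) :
    ∑ θ : Fin n → Fin m, prior q θ = 1 := by
  unfold prior
  rw [← Fintype.piFinset_univ, Finset.sum_prod_piFinset]
  simp [hq1]

lemma my_sum_prior_cond {q : Fin m → ℝ} (hq1 : ∑ k, q k = 1) (j : Fin n) (k : Fin m) :
    ∑ θ : Fin n → Fin m, (if θ j = k then prior q θ else 0) = q k := by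
  have h : ∀ θ : Fin n → Fin m,
      (if θ j = k then prior q θ else 0)
        = ∏ i, (if i = j then (if θ i = k then q (θ i) else 0) else q (θ i)) := by
    intro θ
    by_cases h : θ j = k
    · rw [if_pos h]
      unfold prior
      refine Finset.prod_congr rfl fun i _ => ?_
      by_cases hij : i = j
      · subst hij; rw [if_pos rfl, if_pos h]
      · rw [if_neg hij]
    · rw [if_neg h]
      exact (Finset.prod_eq_zero (Finset.mem_univ j) (by simp [h])).symm
  simp_rw [h]
  rw [← Fintype.piFinset_univ]
  rw [Finset.sum_prod_piFinset Finset.univ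
    (fun (i : Fin n) (t : Fin m) => if i = j then (if t = k then q t else 0) else q t)]
  rw [Finset.prod_eq_single j (fun b _ hb => by simp [hb, hq1])
    (fun h => absurd (Finset.mem_univ j) h)]
  simp

lemma my_sig_nonneg {q : Fin m → ℝ} {φ : (Fin n → Fin m) → Fin n → ℝ}
    (hq0 : ∀ k, 0 ≤ q k) (hφ : IsScheme φ) (i j : Fin n) (k : Fin m) :
    0 ≤ signature q φ i j k := by
  refine Finset.sum_nonneg fun θ _ => ?_
  split
  · exact mul_nonneg (my_prior_nonneg hq0 θ) (hφ.1 θ i)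
  · exact le_refl 0

lemma my_sig_apply {q : Fin m → ℝ} {φ : (Fin n → Fin m) → Fin n → ℝ}
    (f : Fin m → ℝ) (i j : Fin n) :
    ∑ k, f k * signature q φ i j k = ∑ θ, prior q θ * φ θ i * f (θ j) := by
  unfold signature
  simp_rw [Finset.mul_sum]
  rw [Finset.sum_comm]
  refine Finset.sum_congr rfl fun θ _ => ?_
  rw [Finset.sum_eq_single (θ j) (fun b _ hb => by rw [if_neg (Ne.symm hb), mul_zero])
    (fun h => absurd (Finset.mem_univ _) h)]
  rw [if_pos rfl]
  ring

lemma my_sig_total {q : Fin m → ℝ} {φ : (Fin n → Fin m) → Fin n → ℝ} (i j : Fin n) :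
    ∑ k, signature q φ i j k = ∑ θ, prior q θ * φ θ i := by
  have := my_sig_apply (q := q) (φ := φ) (fun _ => (1 : ℝ)) i j
  simpa using this

lemma my_sig_marginal {q : Fin m → ℝ} {φ : (Fin n → Fin m) → Fin n → ℝ}
    (hq1 : ∑ k, q k = 1) (hφ : IsScheme φ) (j : Fin n) (k : Fin m) :
    ∑ i, signature q φ i j k = q k := by
  unfold signature
  rw [Finset.sum_comm, ← my_sum_prior_cond hq1 j k]
  refine Finset.sum_congr rfl fun θ _ => ?_
  by_cases h : θ j = k
  · simp [h, ← Finset.mul_sum, hφ.2 θ]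
  · simp [h]

end Helpers

/-- the optimal value of the LP
`max n·(ξ·x) s.t. ρ·x ≥ ρ·y, x + (n−1)y = q, ‖x‖₁ = 1/n, x, y ≥ 0`
is at least the expected sender utility of every incentive-compatible direct scheme:
for each such scheme there is a feasible LP point whose objective value dominates it. -/
theorem lp_relaxation_upper_bound
    {n m : ℕ} (q ξ ρ : Fin m → ℝ) (hq0 : ∀ k, 0 ≤ q k) (hq1 : ∑ k, q k = 1)
    (φ : (Fin n → Fin m) → Fin n → ℝ) (hφ : IsScheme φ) (hIC : IC q ρ φ) :
    ∃ x y : Fin m → ℝ,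
      (∀ k, 0 ≤ x k) ∧ (∀ k, 0 ≤ y k) ∧
      (∑ k, ρ k * y k ≤ ∑ k, ρ k * x k) ∧
      (∀ k, x k + ((n : ℝ) - 1) * y k = q k) ∧
      (∑ k, x k = 1 / n) ∧
      senderUtil q ξ φ ≤ (n : ℝ) * ∑ k, ξ k * x k := by
  have hn0 : n ≠ 0 := by
    rintro rfl
    have := hφ.2 (fun i => i.elim0)
    simp at this
  have hnR : (0 : ℝ) < (n : ℝ) := by
    exact_mod_cast Nat.pos_of_ne_zero hn0
  -- diagonal and off-diagonal aggregates
  set D : Fin m → ℝ := fun k => ∑ i, signature q φ i i k with hD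
  set E : Fin m → ℝ := fun k => ∑ i, ∑ j ∈ Finset.univ.erase i, signature q φ i j k with hE
  have hDE : ∀ k, D k + E k = n * q k := by
    intro k
    have : D k + E k = ∑ i, ∑ j, signature q φ i j k := by
      rw [hD, hE, ← Finset.sum_add_distrib]
      refine Finset.sum_congr rfl fun i _ => ?_
      rw [add_comm, Finset.sum_erase_add _ _ (Finset.mem_univ i)]
    rw [this, Finset.sum_comm]
    simp [my_sig_marginal hq1 hφ]
  have hsumD : ∑ k, D k = 1 := by
    rw [hD, Finset.sum_comm]
    calc ∑ i, ∑ k, signature q φ i i k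
        = ∑ i, ∑ θ, prior q θ * φ θ i := by
          refine Finset.sum_congr rfl fun i _ => my_sig_total i i
      _ = ∑ θ, prior q θ * ∑ i, φ θ i := by
          rw [Finset.sum_comm]; simp [Finset.mul_sum]
      _ = 1 := by simp [hφ.2, my_sum_prior hq1]
  have hutil : senderUtil q ξ φ = ∑ k, ξ k * D k := by
    have h1 : ∀ i : Fin n, ∑ θ, prior q θ * φ θ i * ξ (θ i)
        = ∑ k, ξ k * signature q φ i i k := fun i => (my_sig_apply ξ i i).symm
    rw [senderUtil, Finset.sum_comm]
    simp_rw [h1]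
    rw [Finset.sum_comm, hD]
    simp [Finset.mul_sum]
  have hDnn : ∀ k, 0 ≤ D k := fun k =>
    Finset.sum_nonneg fun i _ => my_sig_nonneg hq0 hφ i i k
  have hEnn : ∀ k, 0 ≤ E k := fun k =>
    Finset.sum_nonneg fun i _ => Finset.sum_nonneg fun j _ => my_sig_nonneg hq0 hφ i j k
  by_cases hn1 : n = 1
  · subst hn1
    refine ⟨D, D, hDnn, hDnn, le_refl _, ?_, ?_, ?_⟩
    · intro k
      have h1 := hDE k
      have h2 : E k = 0 := by
        rw [hE]
        refine Finset.sum_eq_zero fun i _ => Finset.sum_eq_zero fun j hj => ?_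
        exact absurd (Subsingleton.elim j i) (Finset.ne_of_mem_erase hj)
      push_cast at h1 ⊢
      linarith
    · simpa using hsumD
    · rw [hutil]; push_cast; linarith
  -- now n ≥ 2
  have hn2 : 2 ≤ n := by omega
  have hnm1 : (0 : ℝ) < (n : ℝ) - 1 := by
    have : (2 : ℝ) ≤ (n : ℝ) := by exact_mod_cast hn2
    linarith
  refine ⟨fun k => D k / n, fun k => E k / (n * ((n : ℝ) - 1)), ?_, ?_, ?_, ?_, ?_, ?_⟩
  · intro k
    exact div_nonneg (hDnn k) hnR.le
  · intro k
    exact div_nonneg (hEnn k) (mul_nonneg hnR.le hnm1.le)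
  · -- IC aggregate
    have key : ∑ k, ρ k * E k ≤ ((n : ℝ) - 1) * ∑ k, ρ k * D k := by
      have h1 : ∑ k, ρ k * E k
          = ∑ i, ∑ j ∈ Finset.univ.erase i, ∑ θ, prior q θ * φ θ i * ρ (θ j) := by
        rw [hE]
        simp_rw [Finset.mul_sum]
        rw [Finset.sum_comm]
        refine Finset.sum_congr rfl fun i _ => ?_
        rw [Finset.sum_comm]
        exact Finset.sum_congr rfl fun j _ => my_sig_apply ρ i j
      have h2 : ∑ k, ρ k * D k = ∑ i, ∑ θ, prior q θ * φ θ i * ρ (θ i) := by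
        rw [hD]
        simp_rw [Finset.mul_sum]
        rw [Finset.sum_comm]
        refine Finset.sum_congr rfl fun i _ => my_sig_apply ρ i i
      rw [h1, h2, Finset.mul_sum]
      refine Finset.sum_le_sum fun i _ => ?_
      calc ∑ j ∈ Finset.univ.erase i, ∑ θ, prior q θ * φ θ i * ρ (θ j)
          ≤ ∑ j ∈ Finset.univ.erase i, ∑ θ, prior q θ * φ θ i * ρ (θ i) :=
            Finset.sum_le_sum fun j _ => hIC i j
        _ = ((n : ℝ) - 1) * ∑ θ, prior q θ * φ θ i * ρ (θ i) := by
            rw [Finset.sum_const, Finset.card_erase_of_mem (Finset.mem_univ i)]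
            simp only [Finset.card_univ, Fintype.card_fin, nsmul_eq_mul]
            congr 1
            push_cast [Nat.cast_sub (Nat.one_le_of_lt hn2)]
            ring
    have hx : ∑ k, ρ k * (D k / n) = (∑ k, ρ k * D k) / n := by
      rw [Finset.sum_div]; exact Finset.sum_congr rfl fun k _ => by ring
    have hy : ∑ k, ρ k * (E k / (n * ((n : ℝ) - 1)))
        = (∑ k, ρ k * E k) / (n * ((n : ℝ) - 1)) := by
      rw [Finset.sum_div]; exact Finset.sum_congr rfl fun k _ => by ring
    rw [hx, hy]
    rw [div_le_div_iff₀ (by positivity) hnR]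
    calc (∑ k, ρ k * E k) * n ≤ (((n : ℝ) - 1) * ∑ k, ρ k * D k) * n := by
          apply mul_le_mul_of_nonneg_right key (le_of_lt hnR)
      _ = (∑ k, ρ k * D k) * (n * ((n : ℝ) - 1)) := by ring
  · intro k
    have h := hDE k
    have hne : (n : ℝ) ≠ 0 := ne_of_gt hnR
    have hne1 : (n : ℝ) - 1 ≠ 0 := ne_of_gt hnm1
    have h2 : D k / n + ((n : ℝ) - 1) * (E k / (n * ((n : ℝ) - 1)))
        = (D k + E k) / n := by
      field_simp
    rw [h2, h, mul_div_cancel_left₀ (q k) hne]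
  · rw [← Finset.sum_div, hsumD]
  · rw [hutil]
    have : (n : ℝ) * ∑ k, ξ k * (D k / n) = ∑ k, ξ k * D k := by
      rw [Finset.mul_sum]
      refine Finset.sum_congr rfl fun k _ => ?_
      field_simp
    rw [this]
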